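/- (Inner Tree Theorem, projective version.) Let T be a finite tree with vertex set V, let I = { v ∈ V : deg_T(v) ≥ 2 } be its set of inner vertices, and assume |I| ≥ 2. Let k be any field, let X = ⋃_{v ∈ V} A_v^T(k) ⊆ ℙ(k^V) be the set of k-rational points of F(T) ⊗_{F1} k, and let X_I = ⋃_{v ∈ I} { [x] ∈ ℙ(k^V) : x_w = 0 for all w ∉ ({v} ∪ N_T(v)) ∩ I, and x_v ≠ 0 } be the rational point set of the embedded inner subtree T(I). Then for every field automorphism σ of k and every σ-semilinear bijection g of the vector space k^V whose induced map ḡ on ℙ(k^V) satisfies ḡ(X) = X, one has ḡ(X_I) = X_I. -/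

import Mathlib

/-- The local affine chart `A_v^H(k)` of the vertex `v` of the graph `H`. -/
def looseChart {V : Type} (H : SimpleGraph V) (k : Type) [Field k] (v : V) :
    Set (Projectivization k (V → k)) :=
  {p | (∀ w, w ∉ insert v (H.neighborSet v) → p.rep w = 0) ∧ p.rep v ≠ 0}

/-- The rational point set of the embedded inner subtree `T(I)`: the union over
inner vertices `v ∈ I` of the sets
`{ [x] : x_w = 0 for all w ∉ ({v} ∪ N_T(v)) ∩ I, and x_v ≠ 0 }`. -/
def innerTreePoints {V : Type} (T : SimpleGraph V) (k : Type) [Field k]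
    (I : Set V) : Set (Projectivization k (V → k)) :=
  ⋃ v ∈ I, {p | (∀ w, w ∉ (insert v (T.neighborSet v)) ∩ I → p.rep w = 0) ∧
    p.rep v ≠ 0}

open SimpleGraph

section Tree
variable {V : Type} {T : SimpleGraph V}

/-- star of a vertex -/
def itStar (T : SimpleGraph V) (v : V) : Set V := insert v (T.neighborSet v)

lemma itStar_self (v : V) : v ∈ itStar T v := Set.mem_insert _ _
lemma itStar_adj {v w : V} (h : T.Adj v w) : w ∈ itStar T v := Set.mem_insert_of_mem _ h
lemma mem_itStar_iff {v w : V} : w ∈ itStar T v ↔ w = v ∨ T.Adj v w := by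
  simp [itStar, SimpleGraph.mem_neighborSet]

lemma path_eq_of_tree (hT : T.IsAcyclic) {u v : V} (p q : T.Walk u v)
    (hp : p.IsPath) (hq : q.IsPath) : p = q := by
  have := (isAcyclic_iff_path_unique.mp hT) ⟨p, hp⟩ ⟨q, hq⟩
  exact congrArg Subtype.val this

/-- no triangle in a tree -/
lemma tree_no_triangle (hT : T.IsAcyclic) {a b c : V}
    (hab : T.Adj a b) (hbc : T.Adj b c) (hac : T.Adj a c) : False := by
  have hp : (SimpleGraph.Walk.cons hab (SimpleGraph.Walk.cons hbc SimpleGraph.Walk.nil) :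
      T.Walk a c).IsPath := by
    simp [SimpleGraph.Walk.isPath_def, hab.ne, hbc.ne, hac.ne]
  have hq : (SimpleGraph.Walk.cons hac SimpleGraph.Walk.nil : T.Walk a c).IsPath := by
    simp [SimpleGraph.Walk.isPath_def, hac.ne]
  have := path_eq_of_tree hT _ _ hp hq
  have := congrArg SimpleGraph.Walk.length this
  simp [SimpleGraph.Walk.length_cons] at this

/-- common neighbours in a tree are unique -/
lemma tree_common_nbr (hT : T.IsAcyclic) {a c u w : V} (hac : a ≠ c)
    (h1 : T.Adj a u) (h2 : T.Adj u c) (h3 : T.Adj a w) (h4 : T.Adj w c) : u = w := by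
  have hp : (SimpleGraph.Walk.cons h1 (SimpleGraph.Walk.cons h2 SimpleGraph.Walk.nil) :
      T.Walk a c).IsPath := by
    simp [SimpleGraph.Walk.isPath_def, h1.ne, h2.ne, hac]
  have hq : (SimpleGraph.Walk.cons h3 (SimpleGraph.Walk.cons h4 SimpleGraph.Walk.nil) :
      T.Walk a c).IsPath := by
    simp [SimpleGraph.Walk.isPath_def, h3.ne, h4.ne, hac]
  have := path_eq_of_tree hT _ _ hp hq
  have := congrArg SimpleGraph.Walk.support this
  simp [SimpleGraph.Walk.support_cons] at this
  exact this

end Tree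

section Tree2
variable {V : Type} {T : SimpleGraph V}

/-- no path of length 2 and path of length 3 between the same endpoints in a tree -/
lemma tree_23 (hT : T.IsAcyclic) {a b x y z : V} (hab : a ≠ b)
    (h1 : T.Adj a x) (h2 : T.Adj x b)
    (k1 : T.Adj a y) (k2 : T.Adj y z) (k3 : T.Adj z b)
    (hay : a ≠ z) (hyb : y ≠ b) : False := by
  have hp : (SimpleGraph.Walk.cons h1 (SimpleGraph.Walk.cons h2 SimpleGraph.Walk.nil) :
      T.Walk a b).IsPath := by
    simp [SimpleGraph.Walk.isPath_def, h1.ne, h2.ne, hab]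
  have hq : (SimpleGraph.Walk.cons k1 (SimpleGraph.Walk.cons k2
      (SimpleGraph.Walk.cons k3 SimpleGraph.Walk.nil)) : T.Walk a b).IsPath := by
    simp [SimpleGraph.Walk.isPath_def, k1.ne, k2.ne, k3.ne, hab, hay, hyb]
  have := path_eq_of_tree hT _ _ hp hq
  have := congrArg SimpleGraph.Walk.length this
  simp [SimpleGraph.Walk.length_cons] at this

/-- no path of length 2 and path of length 4 between the same endpoints in a tree -/
lemma tree_24 (hT : T.IsAcyclic) {a b x y z w : V} (hab : a ≠ b)
    (h1 : T.Adj a x) (h2 : T.Adj x b)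
    (k1 : T.Adj a y) (k2 : T.Adj y z) (k3 : T.Adj z w) (k4 : T.Adj w b)
    (haz : a ≠ z) (haw : a ≠ w) (hyw : y ≠ w) (hyb : y ≠ b) (hzb : z ≠ b) : False := by
  have hp : (SimpleGraph.Walk.cons h1 (SimpleGraph.Walk.cons h2 SimpleGraph.Walk.nil) :
      T.Walk a b).IsPath := by
    simp [SimpleGraph.Walk.isPath_def, h1.ne, h2.ne, hab]
  have hq : (SimpleGraph.Walk.cons k1 (SimpleGraph.Walk.cons k2
      (SimpleGraph.Walk.cons k3 (SimpleGraph.Walk.cons k4 SimpleGraph.Walk.nil))) :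
      T.Walk a b).IsPath := by
    simp [SimpleGraph.Walk.isPath_def, k1.ne, k2.ne, k3.ne, k4.ne, hab, haz, haw, hyw, hyb, hzb]
  have := path_eq_of_tree hT _ _ hp hq
  have := congrArg SimpleGraph.Walk.length this
  simp [SimpleGraph.Walk.length_cons] at this

end Tree2

section LemmaG
variable {V : Type} {T : SimpleGraph V}

private lemma caseAB (hT : T.IsAcyclic) {a b d p q : V}
    (hab : T.Adj a b) (hbd : b ∉ itStar T d) (had' : a ≠ d)
    (hpb : p ∈ itStar T b) (hpd : p ∈ itStar T d) (hpa : p ∉ itStar T a)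
    (hqa : q ∈ itStar T a) (hqd : q ∈ itStar T d) (hqb : q ∉ itStar T b) : False := by
  rw [mem_itStar_iff] at hpb hpd hqa hqd
  have hbd1 : b ≠ d := fun h => hbd (by rw [h]; exact itStar_self d)
  have hbd2 : ¬ T.Adj d b := fun h => hbd (itStar_adj h)
  have hpa1 : p ≠ a := fun h => hpa (by rw [h]; exact itStar_self a)
  have hpa2 : ¬ T.Adj a p := fun h => hpa (itStar_adj h)
  -- p cases, shared
  have key : T.Adj a d → False := by
    intro had
    rcases hpb with hpb | hpb
    · rcases hpd with hpd | hpd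
      · exact hbd1 (hpb ▸ hpd ▸ rfl)
      · exact hbd2 (hpb ▸ hpd)
    · rcases hpd with hpd | hpd
      · exact hbd2 (hpd ▸ hpb).symm
      · exact hpa1 (tree_common_nbr hT hbd1 hpb hpd.symm hab.symm had)
  rcases hqa with hqa | hqa
  · rcases hqd with hqd | hqd
    · exact had' (hqa ▸ hqd ▸ rfl)
    · exact key (hqa ▸ hqd).symm
  · rcases hqd with hqd | hqd
    · exact key (hqd ▸ hqa)
    · -- q is a midpoint : Adj a q, Adj d q
      rcases hpb with hpb | hpb
      · rcases hpd with hpd | hpd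
        · exact hbd1 (hpb ▸ hpd ▸ rfl)
        · exact hbd2 (hpb ▸ hpd)
      · rcases hpd with hpd | hpd
        · exact hbd2 (hpd ▸ hpb).symm
        · exact tree_23 hT had' hqa hqd.symm hab hpb hpd.symm hpa1.symm hbd1

lemma lemmaG (hT : T.IsAcyclic) {a b d p q r : V}
    (hpb : p ∈ itStar T b) (hpd : p ∈ itStar T d) (hpa : p ∉ itStar T a)
    (hqa : q ∈ itStar T a) (hqd : q ∈ itStar T d) (hqb : q ∉ itStar T b)
    (hra : r ∈ itStar T a) (hrb : r ∈ itStar T b) (hrd : r ∉ itStar T d) : False := by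
  have hab : a ≠ b := fun h => hqb (h ▸ hqa)
  have had : a ≠ d := fun h => hpa (h ▸ hpd)
  have hbd : b ≠ d := fun h => hqb (h ▸ hqd)
  have hrd1 : r ≠ d := fun h => hrd (by rw [h]; exact itStar_self d)
  have hpa1 : p ≠ a := fun h => hpa (by rw [h]; exact itStar_self a)
  have hqb1 : q ≠ b := fun h => hqb (by rw [h]; exact itStar_self b)
  have hra' := hra; have hrb' := hrb
  rw [mem_itStar_iff] at hra' hrb'
  rcases hra' with h1 | h1
  · rcases hrb' with h2 | h2
    · exact hab (h1 ▸ h2 ▸ rfl)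
    · -- r = a, Adj b r : so Adj b a, and a ∉ S_d
      exact caseAB hT (h1 ▸ h2) (h1 ▸ hrd) hbd hqa hqd hqb hpb hpd hpa
  · rcases hrb' with h2 | h2
    · -- Adj a r, r = b
      exact caseAB hT (h2 ▸ h1) (h2 ▸ hrd) had hpb hpd hpa hqa hqd hqb
    · -- Adj a r, Adj b r : r is a midpoint of a,b
      have hpb' := hpb; have hpd' := hpd; have hqa' := hqa; have hqd' := hqd
      rw [mem_itStar_iff] at hpb' hpd' hqa' hqd'
      have key2 : T.Adj a d → False := by
        intro had2
        rcases hpb' with h3 | h3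
        · rcases hpd' with h4 | h4
          · exact hbd (h3 ▸ h4 ▸ rfl)
          · exact hrd1 (tree_common_nbr hT hab h1 h2.symm had2 (h3 ▸ h4))
        · rcases hpd' with h4 | h4
          · exact hrd1 (tree_common_nbr hT hab h1 h2.symm had2 (h4 ▸ h3).symm)
          · exact tree_23 hT hab h1 h2.symm had2 h4 h3.symm hpa1.symm hbd.symm
      rcases hqa' with h3 | h3
      · rcases hqd' with h4 | h4
        · exact had (h3 ▸ h4 ▸ rfl)
        · exact key2 (h3 ▸ h4).symm
      · rcases hqd' with h4 | h4
        · exact key2 (h4 ▸ h3)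
        · -- Adj a q, Adj d q
          rcases hpb' with h5 | h5
          · rcases hpd' with h6 | h6
            · exact hbd (h5 ▸ h6 ▸ rfl)
            · exact tree_23 hT hab h1 h2.symm h3 h4.symm (h5 ▸ h6) had hqb1
          · rcases hpd' with h6 | h6
            · exact tree_23 hT hab h1 h2.symm h3 h4.symm (h6 ▸ h5).symm had hqb1
            · have hqp : q ≠ p := fun h => hqb (h ▸ itStar_adj h5)
              exact tree_24 hT hab h1 h2.symm h3 h4.symm h6 h5.symm had hpa1.symm hqp hqb1 hbd.symm

end LemmaG

section VC
variable {V : Type} (T : SimpleGraph V) (k : Type) [Field k]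

/-- vector version of the union of loose charts -/
def VC : Set (V → k) := {x | ∃ v, x v ≠ 0 ∧ ∀ w, w ∉ itStar T v → x w = 0}

variable {T k}

lemma VC_nonzero {x : V → k} (hx : x ∈ VC T k) : x ≠ 0 := by
  obtain ⟨v, hv, -⟩ := hx
  intro h; rw [h] at hv; exact hv rfl

lemma VC_smul {x : V → k} {c : k} (hc : c ≠ 0) (hx : x ∈ VC T k) : c • x ∈ VC T k := by
  obtain ⟨v, hv, h⟩ := hx
  exact ⟨v, by simpa [hc] using hv, fun w hw => by simp [h w hw]⟩

/-- Lemma 1 : if x, y, x+y all lie in VC then the supports of x and y lie in a common star -/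
lemma support_lemma (hT : T.IsAcyclic) {x y : V → k}
    (hx : x ∈ VC T k) (hy : y ∈ VC T k) (hxy : x + y ∈ VC T k) :
    ∃ c, ∀ w, w ∉ itStar T c → x w = 0 ∧ y w = 0 := by
  obtain ⟨a, ha, hxa⟩ := hx
  obtain ⟨b, hb, hyb⟩ := hy
  obtain ⟨d, hd, hsd⟩ := hxy
  by_contra hcon
  push_neg at hcon
  obtain ⟨p, hpa, hp2⟩ := hcon a
  obtain ⟨q, hqb, hq2⟩ := hcon b
  obtain ⟨r, hrd, hr2⟩ := hcon d
  -- analyze p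
  have hxp : x p = 0 := hxa p hpa
  have hyp : y p ≠ 0 := fun h => hp2 hxp h
  have hpb : p ∈ itStar T b := by
    by_contra h; exact hyp (hyb p h)
  have hpd : p ∈ itStar T d := by
    by_contra h
    have := hsd p h
    simp only [Pi.add_apply, hxp, zero_add] at this
    exact hyp this
  -- analyze q
  have hyq : y q = 0 := hyb q hqb
  have hxq : x q ≠ 0 := fun h => hq2 h hyq
  have hqa : q ∈ itStar T a := by
    by_contra h; exact hxq (hxa q h)
  have hqd : q ∈ itStar T d := by
    by_contra h
    have := hsd q h
    simp only [Pi.add_apply, hyq, add_zero] at this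
    exact hxq this
  -- analyze r
  have hsr : x r + y r = 0 := hsd r hrd
  have hxr : x r ≠ 0 := by
    intro h
    rw [h, zero_add] at hsr
    exact hr2 h hsr
  have hyr : y r ≠ 0 := by
    intro h
    rw [h, add_zero] at hsr
    exact hr2 hsr h
  have hra : r ∈ itStar T a := by
    by_contra h; exact hxr (hxa r h)
  have hrb : r ∈ itStar T b := by
    by_contra h; exact hyr (hyb r h)
  exact lemmaG hT hpb hpd hpa hqa hqd hqb hra hrb hrd

end VC

section GraphAux
variable {V : Type} {T : SimpleGraph V}

lemma two_le_degree_of_two_nbrs [Fintype V] [DecidableRel T.Adj] {x a b : V}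
    (h1 : T.Adj x a) (h2 : T.Adj x b) (hab : a ≠ b) : 2 ≤ T.degree x := by
  classical
  have hsub : ({a, b} : Finset V) ⊆ T.neighborFinset x := by
    intro z hz
    simp only [Finset.mem_insert, Finset.mem_singleton] at hz
    rcases hz with rfl | rfl
    · exact (T.mem_neighborFinset x z).mpr h1
    · exact (T.mem_neighborFinset x z).mpr h2
  have hcard := Finset.card_le_card hsub
  rw [Finset.card_insert_of_notMem (by simpa using hab), Finset.card_singleton] at hcard
  exact hcard.trans_eq rfl

lemma exists_adj_ne [Fintype V] [DecidableRel T.Adj] {v : V} (hv : 2 ≤ T.degree v) (w : V) :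
    ∃ u, T.Adj v u ∧ u ≠ w := by
  have hlt : 1 < (T.neighborFinset v).card := hv
  obtain ⟨b, hb, hbw⟩ := Finset.exists_mem_ne hlt w
  exact ⟨b, (T.mem_neighborFinset v b).mp hb, hbw⟩

lemma unique_nbr_of_small [Fintype V] [DecidableRel T.Adj] {p m c : V} (hp : T.degree p < 2)
    (h1 : T.Adj p m) (h2 : T.Adj p c) : m = c := by
  by_contra h
  exact absurd (two_le_degree_of_two_nbrs h1 h2 h) (by omega)

lemma exists_nbr_of_ne (hconn : T.Connected) {p v : V} (hpv : p ≠ v) : ∃ m, T.Adj p m := by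
  obtain ⟨w⟩ := hconn p v
  cases w with
  | nil => exact absurd rfl hpv
  | cons h _ => exact ⟨_, h⟩

lemma exists_inner_nbr [Fintype V] [DecidableRel T.Adj] (hT : T.IsTree)
    (hI2 : 2 ≤ {v : V | 2 ≤ T.degree v}.ncard) {v : V} (hv : 2 ≤ T.degree v) :
    ∃ w, T.Adj v w ∧ 2 ≤ T.degree w := by
  have : ∃ v' ∈ {v : V | 2 ≤ T.degree v}, v' ≠ v := by
    by_contra hcon
    push_neg at hcon
    have hsub : {v : V | 2 ≤ T.degree v} ⊆ {v} := fun z hz => hcon z hz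
    have := Set.ncard_le_ncard hsub (Set.finite_singleton v)
    rw [Set.ncard_singleton] at this
    omega
  obtain ⟨v', hv', hne⟩ := this
  classical
  obtain ⟨w⟩ := hT.isConnected v v'
  have hw := w.toPath
  rcases hpath : (hw : T.Walk v v') with _ | @⟨_, x, _, hadj, q⟩
  · exact absurd rfl (Ne.symm hne)
  · rcases hq : q with _ | @⟨_, y, _, hadj2, q2⟩
    · exact ⟨v', hadj, hv'⟩
    · have hpath' : (SimpleGraph.Walk.cons hadj q).IsPath := by
        rw [← hpath]; exact hw.2
      have hyv : y ≠ v := by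
        intro h
        have hnd := hpath'.support_nodup
        rw [hq] at hnd
        simp only [SimpleGraph.Walk.support_cons, List.nodup_cons] at hnd
        exact hnd.1 (by
          simp only [List.mem_cons]
          right
          rw [← h]
          exact SimpleGraph.Walk.start_mem_support q2)
      exact ⟨x, hadj, two_le_degree_of_two_nbrs hadj.symm hadj2 (Ne.symm hyv)⟩

end GraphAux

section Basis
variable {V : Type} {T : SimpleGraph V} {k : Type} [Field k]

lemma not_mem_itStar_ne {w v : V} (hw : w ∉ itStar T v) : w ≠ v :=
  fun h => hw (by rw [h]; exact itStar_self v)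

lemma not_mem_itStar_not_adj {w v : V} (hw : w ∉ itStar T v) : ¬ T.Adj v w :=
  fun h => hw (itStar_adj h)

lemma not_mem_itStar_of_adj {s w v : V} (hs : s ∉ itStar T w) (h : T.Adj w v) : s ≠ v :=
  fun he => hs (by rw [he]; exact itStar_adj h)

open scoped Classical in
/-- the standard basis vector at `z` -/
noncomputable def ee (k : Type) [Field k] (z : V) : V → k := fun w => if w = z then 1 else 0

lemma ee_self (z : V) : ee k z z = 1 := by simp [ee]
lemma ee_ne {z w : V} (h : w ≠ z) : ee k z w = 0 := by simp [ee, h]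

lemma mem_itStar_of_not_adj {c z : V} (hne : z ≠ c) (h : ¬ T.Adj c z) : z ∉ itStar T c := by
  rw [mem_itStar_iff]; push_neg; exact ⟨hne, h⟩

lemma ee_mem_VC (z : V) : ee k z ∈ VC T k :=
  ⟨z, by simp [ee_self], fun w hw => ee_ne (not_mem_itStar_ne hw)⟩

lemma ee_pair_mem_VC {z z' : V} (h : T.Adj z z') : ee k z + ee k z' ∈ VC T k := by
  refine ⟨z, ?_, fun w hw => ?_⟩
  · simp [Pi.add_apply, ee_self, ee_ne h.ne]
  · simp [Pi.add_apply, ee_ne (not_mem_itStar_ne hw), ee_ne (not_mem_itStar_of_adj hw h)]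

lemma ee_pair_not_mem_VC {z z' : V} (hne : z ≠ z') (h : ¬ T.Adj z z') :
    ee k z + ee k z' ∉ VC T k := by
  rintro ⟨c, hc, hcs⟩
  by_cases hcz : c = z
  · subst hcz
    have := hcs z' (mem_itStar_of_not_adj (Ne.symm hne) h)
    simp [Pi.add_apply, ee_ne (Ne.symm hne), ee_self] at this
  · by_cases hcz' : c = z'
    · subst hcz'
      have := hcs z (mem_itStar_of_not_adj hne (fun ha => h ha.symm))
      simp [Pi.add_apply, ee_ne hne, ee_self] at this
    · simp [Pi.add_apply, ee_ne hcz, ee_ne hcz'] at hc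

lemma ee_triple_mem_VC {v w t : V} (h1 : T.Adj w v) (h2 : T.Adj w t) (hvt : v ≠ t) :
    ee k v + ee k w + ee k t ∈ VC T k := by
  refine ⟨w, ?_, fun s hs => ?_⟩
  · simp [Pi.add_apply, ee_self, ee_ne h1.ne, ee_ne h2.ne]
  · simp [Pi.add_apply, ee_ne (not_mem_itStar_ne hs), ee_ne (not_mem_itStar_of_adj hs h1),
      ee_ne (not_mem_itStar_of_adj hs h2)]

lemma ee_triple_not_mem_VC {u v t : V} (huv : u ≠ v) (hut : u ≠ t) (hvt : v ≠ t)
    (h1 : ¬ T.Adj u t) (h2 : ¬ T.Adj v t) (h3 : T.Adj u v) :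
    ee k u + ee k v + ee k t ∉ VC T k := by
  rintro ⟨c, hc, hcs⟩
  have hmem : c = u ∨ c = v ∨ c = t := by
    by_contra hcon
    push_neg at hcon
    simp [Pi.add_apply, ee_ne hcon.1, ee_ne hcon.2.1, ee_ne hcon.2.2] at hc
  rcases hmem with rfl | rfl | rfl
  · have := hcs t (mem_itStar_of_not_adj (Ne.symm hut) h1)
    simp [Pi.add_apply, ee_ne (Ne.symm hut), ee_ne (Ne.symm hvt), ee_self] at this
  · have := hcs t (mem_itStar_of_not_adj (Ne.symm hvt) h2)
    simp [Pi.add_apply, ee_ne (Ne.symm hut), ee_ne (Ne.symm hvt), ee_self] at this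
  · have := hcs u (mem_itStar_of_not_adj hut (fun ha => h1 ha.symm))
    simp [Pi.add_apply, ee_self, ee_ne huv, ee_ne hut] at this

lemma ee_ne_zero (z : V) : (ee k z : V → k) ≠ 0 := by
  intro h
  have := congrFun h z
  simp [ee_self] at this

lemma ee_pair_ne_zero {z z' : V} (h : z ≠ z') : ee k z + ee k z' ≠ 0 := by
  intro he
  have := congrFun he z
  simp [Pi.add_apply, ee_self, ee_ne h] at this

lemma ee_triple_ne_zero {u v t : V} (h1 : u ≠ v) (h2 : u ≠ t) :
    ee k u + ee k v + ee k t ≠ 0 := by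
  intro he
  have := congrFun he u
  simp [Pi.add_apply, ee_self, ee_ne h1, ee_ne h2] at this

end Basis

section Core
variable {V : Type} {T : SimpleGraph V} {k : Type} [Field k]

lemma singleton_of_VC (hT : T.IsAcyclic) {x : V → k} {m : V} (hx : x ∈ VC T k)
    (hsupp : ∀ s, s ∉ itStar T m → x s = 0) (hm : x m = 0) :
    ∃ c, x c ≠ 0 ∧ ∀ s, s ≠ c → x s = 0 := by
  obtain ⟨c, hc, hcs⟩ := hx
  have hcm : c ≠ m := fun h => hc (h ▸ hm)
  have hcSm : c ∈ itStar T m := by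
    by_contra h; exact hc (hsupp c h)
  have hmc : T.Adj m c := by
    rcases mem_itStar_iff.mp hcSm with h | h
    · exact absurd h hcm
    · exact h
  refine ⟨c, hc, fun s hs => ?_⟩
  by_contra hxs
  have hsSc : s ∈ itStar T c := by
    by_contra h; exact hxs (hcs s h)
  have hsSm : s ∈ itStar T m := by
    by_contra h; exact hxs (hsupp s h)
  have hsm : s ≠ m := fun h => hxs (h ▸ hm)
  have hacs : T.Adj c s := by
    rcases mem_itStar_iff.mp hsSc with h | h
    · exact absurd h hs
    · exact h
  have hams : T.Adj m s := by
    rcases mem_itStar_iff.mp hsSm with h | h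
    · exact absurd h hsm
    · exact h
  exact tree_no_triangle hT hmc hacs hams

lemma core [Fintype V] [DecidableRel T.Adj] (hT : T.IsTree)
    (hI2 : 2 ≤ {v : V | 2 ≤ T.degree v}.ncard) (σ : k ≃+* k)
    (g : (V → k) → (V → k)) (hginj : Function.Injective g)
    (hgadd : ∀ x y : V → k, g (x + y) = g x + g y)
    (hgsmul : ∀ (c : k) (x : V → k), g (c • x) = σ c • g x)
    (hgC : ∀ x : V → k, x ≠ 0 → (x ∈ VC T k ↔ g x ∈ VC T k)) :
    ∀ v : V, 2 ≤ T.degree v → ∀ p : V, ¬ 2 ≤ T.degree p → g (ee k v) p = 0 := by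
  have acyc := hT.IsAcyclic
  have g0 : g (0 : V → k) = 0 := by
    have h := hgadd 0 0
    rw [add_zero] at h
    exact (left_eq_add.mp h)
  have gne : ∀ x : V → k, x ≠ 0 → g x ≠ 0 := by
    intro x hx h0
    exact hx (hginj (h0.trans g0.symm))
  intro v hv p hp
  by_contra hpne
  have hp' : T.degree p < 2 := by omega
  have hpv : p ≠ v := fun h => hp (by rw [h]; exact hv)
  obtain ⟨m, hpm⟩ := exists_nbr_of_ne hT.isConnected hpv
  have uniq : ∀ c, T.Adj p c → m = c := fun c hc => unique_nbr_of_small hp' hpm hc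
  -- any star containing p is inside the star of m
  have starsub : ∀ c, p ∈ itStar T c → ∀ s, s ∈ itStar T c → s ∈ itStar T m := by
    intro c hpc s hsc
    rcases mem_itStar_iff.mp hpc with h | h
    · subst h
      rcases mem_itStar_iff.mp hsc with h2 | h2
      · rw [h2]; exact itStar_adj hpm.symm
      · rw [← uniq s h2]; exact itStar_self m
    · rw [← uniq c h.symm] at hsc; exact hsc
  have absorb : ∀ x : V → k, x ∈ VC T k → x p ≠ 0 → ∀ s, s ∉ itStar T m → x s = 0 := by
    rintro x ⟨c, hc, hcs⟩ hxp s hs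
    have hpc : p ∈ itStar T c := by
      by_contra h; exact hxp (hcs p h)
    exact hcs s (fun hsc => hs (starsub c hpc s hsc))
  -- the configuration u - v - w - t
  obtain ⟨w, hvw, hw2⟩ := exists_inner_nbr hT hI2 hv
  obtain ⟨u, hvu, huw⟩ := exists_adj_ne hv w
  obtain ⟨t, hwt, htv⟩ := exists_adj_ne hw2 v
  have huv : u ≠ v := hvu.ne'
  have htw : t ≠ w := hwt.ne'
  have hvw1 : v ≠ w := hvw.ne
  have hvt : v ≠ t := Ne.symm htv
  have hut : u ≠ t := by
    intro h
    exact tree_no_triangle acyc hvw (by rw [h]; exact hwt) hvu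
  have hnadj_uw : ¬ T.Adj u w := fun h => tree_no_triangle acyc hvu h hvw
  have hnadj_vt : ¬ T.Adj v t := fun h => tree_no_triangle acyc hvw hwt h
  have hnadj_ut : ¬ T.Adj u t := by
    intro h
    exact huw (tree_common_nbr acyc hvt hvu h hvw hwt)
  -- images of basis vectors
  have hfv : g (ee k v) ∈ VC T k := (hgC _ (ee_ne_zero v)).mp (ee_mem_VC v)
  have hfw : g (ee k w) ∈ VC T k := (hgC _ (ee_ne_zero w)).mp (ee_mem_VC w)
  have hfu : g (ee k u) ∈ VC T k := (hgC _ (ee_ne_zero u)).mp (ee_mem_VC u)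
  have hft : g (ee k t) ∈ VC T k := (hgC _ (ee_ne_zero t)).mp (ee_mem_VC t)
  -- supports inside the star of m
  have hFv : ∀ s, s ∉ itStar T m → g (ee k v) s = 0 := absorb _ hfv hpne
  have hFu : ∀ s, s ∉ itStar T m → g (ee k u) s = 0 := by
    have hpair : g (ee k u) + g (ee k v) ∈ VC T k := by
      rw [← hgadd]
      exact (hgC _ (ee_pair_ne_zero huv)).mp (ee_pair_mem_VC hvu.symm)
    obtain ⟨c, hc⟩ := support_lemma acyc hfu hfv hpair
    have hpc : p ∈ itStar T c := by
      by_contra h; exact hpne (hc p h).2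
    exact fun s hs => (hc s (fun hsc => hs (starsub c hpc s hsc))).1
  have hFw : ∀ s, s ∉ itStar T m → g (ee k w) s = 0 := by
    have hpair : g (ee k w) + g (ee k v) ∈ VC T k := by
      rw [← hgadd]
      exact (hgC _ (ee_pair_ne_zero hvw1.symm)).mp (ee_pair_mem_VC hvw.symm)
    obtain ⟨c, hc⟩ := support_lemma acyc hfw hfv hpair
    have hpc : p ∈ itStar T c := by
      by_contra h; exact hpne (hc p h).2
    exact fun s hs => (hc s (fun hsc => hs (starsub c hpc s hsc))).1
  have hFt : ∀ s, s ∉ itStar T m → g (ee k t) s = 0 := by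
    have hwtmem : g (ee k w) + g (ee k t) ∈ VC T k := by
      rw [← hgadd]
      exact (hgC _ (ee_pair_ne_zero htw.symm)).mp (ee_pair_mem_VC hwt)
    have htrip : g (ee k w) + g (ee k t) + g (ee k v) ∈ VC T k := by
      have h1 : g (ee k v) + g (ee k w) + g (ee k t) ∈ VC T k := by
        rw [← hgadd, ← hgadd]
        exact (hgC _ (ee_triple_ne_zero hvw1 hvt)).mp (ee_triple_mem_VC hvw.symm hwt hvt)
      rwa [show g (ee k v) + g (ee k w) + g (ee k t)
        = g (ee k w) + g (ee k t) + g (ee k v) from by abel] at h1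
    obtain ⟨c, hc⟩ := support_lemma acyc hwtmem hfv htrip
    have hpc : p ∈ itStar T c := by
      by_contra h; exact hpne (hc p h).2
    intro s hs
    have h1 : (g (ee k w) + g (ee k t)) s = 0 :=
      (hc s (fun hsc => hs (starsub c hpc s hsc))).1
    have h2 := hFw s hs
    simpa [Pi.add_apply, h2] using h1
  -- m-coefficients vanish
  have badpair : ∀ a b : V, a ≠ b → ¬ T.Adj a b →
      (∀ s, s ∉ itStar T m → g (ee k a) s = 0) → (∀ s, s ∉ itStar T m → g (ee k b) s = 0) →
      g (ee k a) m + g (ee k b) m = 0 := by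
    intro a b hab hnadj hFa hFb
    by_contra hne0
    have hsum : g (ee k a) + g (ee k b) ∈ VC T k := by
      refine ⟨m, hne0, fun s hs => ?_⟩
      simp [Pi.add_apply, hFa s hs, hFb s hs]
    rw [← hgadd] at hsum
    exact ee_pair_not_mem_VC hab hnadj ((hgC _ (ee_pair_ne_zero hab)).mpr hsum)
  have hm_uw := badpair u w huw hnadj_uw hFu hFw
  have hm_vt := badpair v t hvt hnadj_vt hFv hFt
  have hm_ut := badpair u t hut hnadj_ut hFu hFt
  have hm_uvt : g (ee k u) m + g (ee k v) m + g (ee k t) m = 0 := by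
    by_contra hne0
    have hsum : g (ee k u) + g (ee k v) + g (ee k t) ∈ VC T k := by
      refine ⟨m, hne0, fun s hs => ?_⟩
      simp [Pi.add_apply, hFu s hs, hFv s hs, hFt s hs]
    rw [← hgadd, ← hgadd] at hsum
    exact ee_triple_not_mem_VC huv hut hvt hnadj_ut hnadj_vt hvu.symm
      ((hgC _ (ee_triple_ne_zero huv hut)).mpr hsum)
  have hau : g (ee k u) m = 0 := by linear_combination hm_uvt - hm_vt
  have hat : g (ee k t) m = 0 := by linear_combination hm_ut - (hm_uvt - hm_vt)
  have hav : g (ee k v) m = 0 := by linear_combination hm_vt - (hm_ut - (hm_uvt - hm_vt))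
  have haw : g (ee k w) m = 0 := by linear_combination hm_uw - (hm_uvt - hm_vt)
  -- singleton supports
  obtain ⟨cv, hcv1, hcv2⟩ := singleton_of_VC acyc hfv hFv hav
  have hcvp : cv = p := by
    by_contra h
    exact hpne (hcv2 p (fun h2 => h h2.symm))
  rw [hcvp] at hcv1 hcv2
  obtain ⟨cw, hcw1, hcw2⟩ := singleton_of_VC acyc hfw hFw haw
  -- show cw = p using the good pair {v, w}
  have hfvw : g (ee k v) + g (ee k w) ∈ VC T k := by
    rw [← hgadd]
    exact (hgC _ (ee_pair_ne_zero hvw1)).mp (ee_pair_mem_VC hvw)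
  have hcwp : cw = p := by
    by_contra hne
    obtain ⟨c2, hc21, hc22⟩ := hfvw
    have hfwcv : g (ee k w) p = 0 := hcw2 p (fun h => hne h.symm)
    have hfvcw : g (ee k v) cw = 0 := hcv2 cw (fun h => hne h)
    have hc2mem : c2 = p ∨ c2 = cw := by
      by_contra hcon
      push_neg at hcon
      simp [Pi.add_apply, hcv2 c2 hcon.1, hcw2 c2 hcon.2] at hc21
    have hadjcw : T.Adj p cw := by
      rcases hc2mem with rfl | rfl
      · have hmem : cw ∈ itStar T c2 := by
          by_contra h
          have := hc22 cw h
          simp [Pi.add_apply, hfvcw] at this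
          exact hcw1 this
        rcases mem_itStar_iff.mp hmem with h | h
        · exact absurd h hne
        · exact h
      · have hmem : p ∈ itStar T c2 := by
          by_contra h
          have := hc22 p h
          simp [Pi.add_apply, hfwcv] at this
          exact hcv1 this
        rcases mem_itStar_iff.mp hmem with h | h
        · exact absurd h.symm hne
        · exact h.symm
    have : m = cw := uniq cw hadjcw
    rw [← this] at hcw1
    exact hcw1 haw
  rw [hcwp] at hcw1 hcw2
  -- proportionality contradiction
  have hprop : g (σ.symm (g (ee k w) p * (g (ee k v) p)⁻¹) • ee k v) = g (ee k w) := by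
    rw [hgsmul]
    funext s
    rw [Pi.smul_apply, smul_eq_mul, RingEquiv.apply_symm_apply]
    by_cases hs : s = p
    · subst hs
      rw [mul_assoc, inv_mul_cancel₀ hpne, mul_one]
    · rw [hcv2 s hs, hcw2 s hs, mul_zero]
  have heq := hginj hprop
  have hfinal := congrFun heq w
  rw [Pi.smul_apply, ee_ne hvw.ne', ee_self, smul_eq_mul, mul_zero] at hfinal
  exact one_ne_zero hfinal.symm

end Core

section VCIsec
variable {V : Type} (T : SimpleGraph V) (k : Type) [Field k]

/-- vector version of the inner tree points -/
def VCI (I : Set V) : Set (V → k) :=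
  {x | ∃ v ∈ I, x v ≠ 0 ∧ ∀ w, w ∉ itStar T v ∩ I → x w = 0}

variable {T k}

lemma VCI_nonzero {I : Set V} {x : V → k} (hx : x ∈ VCI T k I) : x ≠ 0 := by
  obtain ⟨v, -, hv, -⟩ := hx
  intro h; rw [h] at hv; exact hv rfl

lemma VCI_sub_VC {I : Set V} {x : V → k} (hx : x ∈ VCI T k I) : x ∈ VC T k := by
  obtain ⟨v, hvI, hv, hsupp⟩ := hx
  exact ⟨v, hv, fun w hw => hsupp w (fun hmem => hw hmem.1)⟩

lemma VCI_suppI {I : Set V} {x : V → k} (hx : x ∈ VCI T k I) : ∀ s, s ∉ I → x s = 0 := by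
  obtain ⟨v, hvI, hv, hsupp⟩ := hx
  exact fun s hs => hsupp s (fun hmem => hs hmem.2)

lemma mem_VCI_of (I : Set V) {x : V → k} (hx : x ∈ VC T k)
    (hsupp : ∀ s, s ∉ I → x s = 0) : x ∈ VCI T k I := by
  obtain ⟨v, hv, hvs⟩ := hx
  have hvI : v ∈ I := by
    by_contra h; exact hv (hsupp v h)
  refine ⟨v, hvI, hv, fun w hw => ?_⟩
  rw [Set.mem_inter_iff] at hw
  push_neg at hw
  by_cases h1 : w ∈ itStar T v
  · exact hsupp w (hw h1)
  · exact hvs w h1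

end VCIsec

section Proj
variable {V : Type} {T : SimpleGraph V} {k : Type} [Field k]

lemma rep_eq {x : V → k} (hx : x ≠ 0) :
    ∃ a : k, a ≠ 0 ∧ ∀ w, (Projectivization.mk k x hx).rep w = a * x w := by
  have h1 := Projectivization.mk_rep (Projectivization.mk k x hx)
  rw [Projectivization.mk_eq_mk_iff] at h1
  obtain ⟨a, ha⟩ := h1
  refine ⟨(a : k), a.ne_zero, fun w => ?_⟩
  rw [← ha]
  simp [Units.smul_def]

lemma mk_mem_X_iff {x : V → k} (hx : x ≠ 0) :
    Projectivization.mk k x hx ∈ (⋃ v : V, looseChart T k v) ↔ x ∈ VC T k := by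
  obtain ⟨a, ha, hrep⟩ := rep_eq hx
  simp only [Set.mem_iUnion, looseChart, Set.mem_setOf_eq]
  constructor
  · rintro ⟨v, h1, h2⟩
    refine ⟨v, fun h => h2 (by rw [hrep v, h, mul_zero]), fun w hw => ?_⟩
    have := h1 w hw
    rw [hrep w] at this
    rcases mul_eq_zero.mp this with h | h
    · exact absurd h ha
    · exact h
  · rintro ⟨v, h1, h2⟩
    exact ⟨v, fun w hw => by rw [hrep w, h2 w hw, mul_zero],
      fun h => h1 (by rcases mul_eq_zero.mp (hrep v ▸ h) with h' | h'
                      · exact absurd h' ha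
                      · exact h')⟩

lemma mk_mem_XI_iff {I : Set V} {x : V → k} (hx : x ≠ 0) :
    Projectivization.mk k x hx ∈ innerTreePoints T k I ↔ x ∈ VCI T k I := by
  obtain ⟨a, ha, hrep⟩ := rep_eq hx
  simp only [innerTreePoints, Set.mem_iUnion, Set.mem_setOf_eq]
  constructor
  · rintro ⟨v, hvI, h1, h2⟩
    refine ⟨v, hvI, fun h => h2 (by rw [hrep v, h, mul_zero]), fun w hw => ?_⟩
    have := h1 w hw
    rw [hrep w] at this
    rcases mul_eq_zero.mp this with h | h
    · exact absurd h ha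
    · exact h
  · rintro ⟨v, hvI, h1, h2⟩
    exact ⟨v, hvI, fun w hw => by rw [hrep w, h2 w hw, mul_zero],
      fun h => h1 (by rcases mul_eq_zero.mp (hrep v ▸ h) with h' | h'
                      · exact absurd h' ha
                      · exact h')⟩

lemma mem_X_rep {p : Projectivization k (V → k)}
    (hp : p ∈ (⋃ v : V, looseChart T k v)) : p.rep ∈ VC T k := by
  simp only [Set.mem_iUnion, looseChart, Set.mem_setOf_eq] at hp
  obtain ⟨v, h1, h2⟩ := hp
  exact ⟨v, h2, h1⟩

lemma mem_XI_rep {I : Set V} {p : Projectivization k (V → k)}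
    (hp : p ∈ innerTreePoints T k I) : p.rep ∈ VCI T k I := by
  simp only [innerTreePoints, Set.mem_iUnion, Set.mem_setOf_eq] at hp
  obtain ⟨v, hvI, h1, h2⟩ := hp
  exact ⟨v, hvI, h2, h1⟩

end Proj

section Preserve
variable {V : Type} {T : SimpleGraph V} {k : Type} [Field k]

lemma g_sum (g : (V → k) → (V → k)) (g0 : g 0 = 0)
    (hgadd : ∀ x y : V → k, g (x + y) = g x + g y) {ι : Type} (s : Finset ι)
    (F : ι → (V → k)) : g (∑ i ∈ s, F i) = ∑ i ∈ s, g (F i) := by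
  classical
  induction s using Finset.induction with
  | empty => simpa using g0
  | insert _ _ hnotmem ih =>
    rw [Finset.sum_insert hnotmem, Finset.sum_insert hnotmem, hgadd, ih]

lemma decompose [Fintype V] (x : V → k) : x = ∑ z : V, x z • ee k z := by
  classical
  funext s
  rw [Finset.sum_apply]
  rw [Finset.sum_eq_single s]
  · simp [ee_self]
  · intro z _ hz
    simp [Pi.smul_apply, ee_ne (Ne.symm hz)]
  · intro h
    exact absurd (Finset.mem_univ s) h

lemma VCI_preserved [Fintype V] [DecidableRel T.Adj] (hT : T.IsTree)
    (hI2 : 2 ≤ {v : V | 2 ≤ T.degree v}.ncard) (σ : k ≃+* k)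
    (g : (V → k) → (V → k)) (hginj : Function.Injective g)
    (hgadd : ∀ x y : V → k, g (x + y) = g x + g y)
    (hgsmul : ∀ (c : k) (x : V → k), g (c • x) = σ c • g x)
    (hgC : ∀ x : V → k, x ≠ 0 → (x ∈ VC T k ↔ g x ∈ VC T k)) :
    ∀ x, x ∈ VCI T k {v : V | 2 ≤ T.degree v} → g x ∈ VCI T k {v : V | 2 ≤ T.degree v} := by
  have hcore := core hT hI2 σ g hginj hgadd hgsmul hgC
  have g0 : g (0 : V → k) = 0 := by
    have h := hgadd 0 0
    rw [add_zero] at h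
    exact (left_eq_add.mp h)
  intro x hx
  have hxVC : x ∈ VC T k := VCI_sub_VC hx
  have hgxVC : g x ∈ VC T k := (hgC x (VCI_nonzero hx)).mp hxVC
  have hsuppI : ∀ s, s ∉ {v : V | 2 ≤ T.degree v} → g x s = 0 := by
    intro s hs
    have hdec : g x = ∑ z : V, σ (x z) • g (ee k z) := by
      conv_lhs => rw [decompose x]
      rw [g_sum g g0 hgadd]
      congr 1
      funext z
      rw [hgsmul]
    rw [hdec, Finset.sum_apply]
    apply Finset.sum_eq_zero
    intro z _
    by_cases hz : 2 ≤ T.degree z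
    · rw [Pi.smul_apply, hcore z hz s hs, smul_zero]
    · have : x z = 0 := VCI_suppI hx z hz
      rw [Pi.smul_apply, this, map_zero, zero_smul]
  exact mem_VCI_of _ hgxVC hsuppI

end Preserve

/-- **Inner Tree Theorem** (projective version). Let `T` be a finite tree with
inner vertex set `I = {v : deg v ≥ 2}`, `|I| ≥ 2`, and `k` a field. Every
`σ`-semilinear bijection `g` of `k^V` (for `σ` a field automorphism of `k`)
whose induced map `ḡ` on `ℙ(k^V)` stabilizes the rational point set
`X = ⋃_{v} A_v^T(k)` of `F(T) ⊗_{F1} k` also stabilizes the rational point set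
`X_I` of the embedded inner subtree `T(I)`. -/
theorem inner_tree_theorem {V : Type} [Fintype V]
    (T : SimpleGraph V) [DecidableRel T.Adj] (hT : T.IsTree)
    (I : Set V) (hI : I = {v | 2 ≤ T.degree v}) (hIcard : 2 ≤ I.ncard)
    (k : Type) [Field k] (σ : k ≃+* k)
    (g : (V → k) → (V → k)) (hgbij : Function.Bijective g)
    (hgadd : ∀ u v : V → k, g (u + v) = g u + g v)
    (hgsmul : ∀ (c : k) (v : V → k), g (c • v) = σ c • g v)
    (gbar : Projectivization k (V → k) → Projectivization k (V → k))
    (hgbar : ∀ (v : V → k) (hv : v ≠ 0) (hgv : g v ≠ 0),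
      gbar (Projectivization.mk k v hv) = Projectivization.mk k (g v) hgv)
    (hX : gbar '' (⋃ v : V, looseChart T k v) = ⋃ v : V, looseChart T k v) :
    gbar '' innerTreePoints T k I = innerTreePoints T k I := by
  subst hI
  have g0 : g (0 : V → k) = 0 := by
    have h := hgadd 0 0
    rw [add_zero] at h
    exact (left_eq_add.mp h)
  have gne : ∀ x : V → k, x ≠ 0 → g x ≠ 0 := by
    intro x hx h0
    exact hx (hgbij.injective (h0.trans g0.symm))
  -- transfer of the chart condition
  have hgC : ∀ x : V → k, x ≠ 0 → (x ∈ VC T k ↔ g x ∈ VC T k) := by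
    intro x hx
    constructor
    · intro hxVC
      have h1 : Projectivization.mk k x hx ∈ (⋃ v : V, looseChart T k v) :=
        (mk_mem_X_iff hx).mpr hxVC
      have h2 : gbar (Projectivization.mk k x hx) ∈
          gbar '' (⋃ v : V, looseChart T k v) := Set.mem_image_of_mem _ h1
      rw [hX, hgbar x hx (gne x hx)] at h2
      exact (mk_mem_X_iff (gne x hx)).mp h2
    · intro hgxVC
      have h1 : Projectivization.mk k (g x) (gne x hx) ∈ (⋃ v : V, looseChart T k v) :=
        (mk_mem_X_iff _).mpr hgxVC
      rw [← hX] at h1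
      obtain ⟨q, hqX, hq⟩ := h1
      have hrepVC : q.rep ∈ VC T k := mem_X_rep hqX
      have hqx : gbar (Projectivization.mk k q.rep q.rep_nonzero)
          = Projectivization.mk k (g x) (gne x hx) := by
        rw [Projectivization.mk_rep]; exact hq
      rw [hgbar q.rep q.rep_nonzero (gne _ q.rep_nonzero),
        Projectivization.mk_eq_mk_iff] at hqx
      obtain ⟨a, ha⟩ := hqx
      have h2 : g ((σ.symm (a : k)) • x) = g q.rep := by
        rw [hgsmul, RingEquiv.apply_symm_apply, ← ha]
        funext s
        simp [Units.smul_def]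
      have h3 := hgbij.injective h2
      have ha0 : σ.symm (a : k) ≠ 0 := by
        simp [a.ne_zero]
      have hxq : x = (σ.symm (a : k))⁻¹ • q.rep := by
        rw [← h3, smul_smul, inv_mul_cancel₀ ha0, one_smul]
      rw [hxq]
      exact VC_smul (inv_ne_zero ha0) hrepVC
  -- the inverse map
  let G := Equiv.ofBijective g hgbij
  have hgg' : ∀ y, g (G.symm y) = y := fun y => G.apply_symm_apply y
  have hg'ne : ∀ y : V → k, y ≠ 0 → G.symm y ≠ 0 := by
    intro y hy h0
    exact hy (by rw [← hgg' y, h0, g0])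
  have hg'add : ∀ x y : V → k, G.symm (x + y) = G.symm x + G.symm y := by
    intro x y
    apply hgbij.injective
    rw [hgadd, hgg', hgg', hgg']
  have hg'smul : ∀ (c : k) (x : V → k), G.symm (c • x) = σ.symm c • G.symm x := by
    intro c x
    apply hgbij.injective
    rw [hgsmul, hgg', hgg', RingEquiv.apply_symm_apply]
  have hg'C : ∀ x : V → k, x ≠ 0 → (x ∈ VC T k ↔ G.symm x ∈ VC T k) := by
    intro x hx
    have := hgC (G.symm x) (hg'ne x hx)
    rw [hgg'] at this
    exact this.symm
  -- preservation of the inner points, both ways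
  have hpres := VCI_preserved hT hIcard σ g hgbij.injective hgadd hgsmul hgC
  have hpres' := VCI_preserved hT hIcard σ.symm (⇑G.symm) G.symm.injective hg'add hg'smul hg'C
  ext q
  constructor
  · rintro ⟨pt, hpt, rfl⟩
    have hrep : pt.rep ∈ VCI T k {v : V | 2 ≤ T.degree v} := mem_XI_rep hpt
    have h1 := hpres _ hrep
    rw [← Projectivization.mk_rep pt, hgbar _ pt.rep_nonzero (gne _ pt.rep_nonzero)]
    exact (mk_mem_XI_iff _).mpr h1
  · intro hq
    have hrep : q.rep ∈ VCI T k {v : V | 2 ≤ T.degree v} := mem_XI_rep hq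
    have h1 := hpres' _ hrep
    have hne1 : G.symm q.rep ≠ 0 := hg'ne _ q.rep_nonzero
    refine ⟨Projectivization.mk k (G.symm q.rep) hne1, (mk_mem_XI_iff _).mpr h1, ?_⟩
    rw [hgbar _ _ (gne _ hne1)]
    have heq : (Projectivization.mk k (g (G.symm q.rep)) (gne _ hne1))
        = Projectivization.mk k q.rep q.rep_nonzero := by
      rw [Projectivization.mk_eq_mk_iff]
      exact ⟨1, by rw [one_smul, hgg']⟩
    rw [heq, Projectivization.mk_rep]
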